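/- For all k×k real matrices A, B, define δ̂₂(A, B) := (1/k)·min over k×k permutation matrices P₁, P₂ of ‖P₁ A P₂ − B‖_F, and let δ₂(A, B) := min over measure-preserving maps φ₁, φ₂: [0,1] → [k] of ‖A^{φ₁} − B^{φ₂}‖₂ (L² norm on [0,1]²). Then δ̂₂(A, B) ≤ δ₂(A, B). -/

import Mathlib

open Matrix MeasureTheory

/-- A map `φ : ℝ → Fin k` is measure preserving on `[0,1]` if each fiber
has Lebesgue measure `1/k`. -/
def MeasurePres {k : ℕ} (φ : ℝ → Fin k) : Prop :=
  Measurable φ ∧ ∀ i : Fin k,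
    volume (φ ⁻¹' {i} ∩ Set.Icc (0 : ℝ) 1) = ENNReal.ofReal (1 / k)

/-- The permutation matrix of `σ`. -/
def permMat {k : ℕ} (σ : Equiv.Perm (Fin k)) : Matrix (Fin k) (Fin k) ℝ :=
  Matrix.of fun i j => if σ i = j then (1 : ℝ) else 0

/-! ### Auxiliary lemmas -/

lemma comp_fiber_eq {ι : Type*} [Fintype ι] [MeasurableSpace ι]
    [MeasurableSingletonClass ι] (ψ : ℝ → ι) (h : ι → ℝ) (x : ℝ) :
    h (ψ x) = ∑ p : ι, Set.indicator (ψ ⁻¹' {p}) (fun _ => h p) x := by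
  rw [Finset.sum_eq_single (ψ x)]
  · simp [Set.indicator_of_mem]
  · intro p _ hp
    exact Set.indicator_of_notMem (by simpa using (Ne.symm hp)) _
  · simp

lemma restrict_fiber_lt_top {ι : Type*} (ψ : ℝ → ι) (p : Set ι) :
    (volume.restrict (Set.Icc (0:ℝ) 1)) (ψ ⁻¹' p) < ⊤ := by
  calc (volume.restrict (Set.Icc (0:ℝ) 1)) (ψ ⁻¹' p)
      ≤ (volume.restrict (Set.Icc (0:ℝ) 1)) Set.univ := measure_mono (Set.subset_univ _)
    _ = volume (Set.Icc (0:ℝ) 1) := Measure.restrict_apply_univ _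
    _ < ⊤ := measure_Icc_lt_top

lemma integrableOn_comp_fiber {ι : Type*} [Fintype ι] [MeasurableSpace ι]
    [MeasurableSingletonClass ι] (ψ : ℝ → ι) (hψ : Measurable ψ) (h : ι → ℝ) :
    IntegrableOn (fun x => h (ψ x)) (Set.Icc (0:ℝ) 1) volume := by
  have : (fun x => h (ψ x)) = fun x => ∑ p : ι, Set.indicator (ψ ⁻¹' {p}) (fun _ => h p) x := by
    funext x; exact comp_fiber_eq ψ h x
  rw [IntegrableOn, this]
  apply integrable_finset_sum
  intro p _
  rw [integrable_indicator_iff (hψ (measurableSet_singleton p))]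
  exact (integrableOn_const (restrict_fiber_lt_top ψ {p}).ne)

lemma integral_comp_fiber {ι : Type*} [Fintype ι] [MeasurableSpace ι]
    [MeasurableSingletonClass ι] (ψ : ℝ → ι) (hψ : Measurable ψ) (h : ι → ℝ) :
    ∫ x in Set.Icc (0:ℝ) 1, h (ψ x) =
      ∑ p : ι, (volume (ψ ⁻¹' {p} ∩ Set.Icc (0:ℝ) 1)).toReal * h p := by
  have hrw : (fun x => h (ψ x)) = fun x => ∑ p : ι, Set.indicator (ψ ⁻¹' {p}) (fun _ => h p) x :=
    funext (comp_fiber_eq ψ h)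
  rw [hrw, integral_finset_sum]
  · refine Finset.sum_congr rfl fun p _ => ?_
    rw [integral_indicator_const _ (hψ (measurableSet_singleton p)), measureReal_def,
      Measure.restrict_apply (hψ (measurableSet_singleton p))]
    simp [mul_comm]
  · intro p _
    rw [integrable_indicator_iff (hψ (measurableSet_singleton p))]
    exact (integrableOn_const (restrict_fiber_lt_top ψ {p}).ne)

lemma exists_perm_le {k : ℕ} (D : Matrix (Fin k) (Fin k) ℝ)
    (hD : D ∈ doublyStochastic ℝ (Fin k)) (g : Fin k → Fin k → ℝ) :
    ∃ σ : Equiv.Perm (Fin k), ∑ i, g i (σ i) ≤ ∑ i, ∑ j, D i j * g i j := by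
  obtain ⟨w, hw0, hw1, hwD⟩ := exists_eq_sum_perm_of_mem_doublyStochastic hD
  have hDij : ∀ i j, D i j = ∑ σ : Equiv.Perm (Fin k), w σ * (if j = σ i then 1 else 0) := by
    intro i j
    rw [← hwD]
    simp [Matrix.sum_apply, Matrix.smul_apply, Equiv.Perm.permMatrix, PEquiv.toMatrix_apply,
      Equiv.toPEquiv_apply, smul_eq_mul, eq_comm]
  have key : ∑ σ : Equiv.Perm (Fin k), w σ * (∑ i, g i (σ i)) = ∑ i, ∑ j, D i j * g i j :=
    calc ∑ σ : Equiv.Perm (Fin k), w σ * (∑ i, g i (σ i))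
        = ∑ σ : Equiv.Perm (Fin k), ∑ i, w σ * g i (σ i) := by simp [Finset.mul_sum]
      _ = ∑ i, ∑ σ : Equiv.Perm (Fin k), w σ * g i (σ i) := Finset.sum_comm
      _ = ∑ i, ∑ σ : Equiv.Perm (Fin k), ∑ j,
            (w σ * if j = σ i then 1 else 0) * g i j := by
          refine Finset.sum_congr rfl fun i _ => Finset.sum_congr rfl fun σ _ => ?_
          rw [Finset.sum_eq_single (σ i)] <;> simp +contextual
      _ = ∑ i, ∑ j, ∑ σ : Equiv.Perm (Fin k),
            (w σ * if j = σ i then 1 else 0) * g i j := by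
          exact Finset.sum_congr rfl fun i _ => Finset.sum_comm
      _ = ∑ i, ∑ j, D i j * g i j := by
          refine Finset.sum_congr rfl fun i _ => Finset.sum_congr rfl fun j _ => ?_
          rw [hDij i j, Finset.sum_mul]
  by_contra hcon
  push_neg at hcon
  set S := ∑ i, ∑ j, D i j * g i j with hS
  obtain ⟨σ₀, hσ₀⟩ : ∃ σ : Equiv.Perm (Fin k), 0 < w σ := by
    by_contra hall
    push_neg at hall
    have : ∀ σ : Equiv.Perm (Fin k), w σ = 0 := fun σ => le_antisymm (hall σ) (hw0 σ)
    simp [this] at hw1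
  have hlt : ∑ σ : Equiv.Perm (Fin k), w σ * S <
      ∑ σ : Equiv.Perm (Fin k), w σ * (∑ i, g i (σ i)) :=
    Finset.sum_lt_sum (fun σ _ => mul_le_mul_of_nonneg_left (hcon σ).le (hw0 σ))
      ⟨σ₀, Finset.mem_univ _, mul_lt_mul_of_pos_left (hcon σ₀) hσ₀⟩
  rw [key, ← Finset.sum_mul, hw1, one_mul] at hlt
  exact lt_irrefl _ hlt

noncomputable def phi0 (k : ℕ) (hk : 0 < k) : ℝ → Fin k := fun x =>
  ⟨min ⌊x * k⌋₊ (k - 1), lt_of_le_of_lt (min_le_right _ _) (Nat.sub_lt hk one_pos)⟩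

lemma phi0_measurePres (k : ℕ) (hk : 0 < k) : MeasurePres (phi0 k hk) := by
  have hkR : (0:ℝ) < k := Nat.cast_pos.2 hk
  have hfl : Measurable fun x : ℝ => ⌊x * (k:ℝ)⌋₊ :=
    Nat.measurable_floor.comp (measurable_id.mul_const _)
  constructor
  · exact (measurable_of_countable
      (fun n : ℕ => (⟨min n (k-1), lt_of_le_of_lt (min_le_right _ _)
        (Nat.sub_lt hk one_pos)⟩ : Fin k))).comp hfl
  · intro i
    have hikm : (i : ℕ) ≤ k - 1 := Nat.le_sub_one_of_lt i.isLt
    by_cases hcase : (i : ℕ) < k - 1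
    · have hset : phi0 k hk ⁻¹' {i} ∩ Set.Icc (0:ℝ) 1
          = Set.Ico ((i:ℝ)/k) (((i:ℝ)+1)/k) := by
        ext x
        simp only [Set.mem_inter_iff, Set.mem_preimage, Set.mem_singleton_iff,
          Set.mem_Icc, Set.mem_Ico, phi0, Fin.ext_iff]
        constructor
        · rintro ⟨hmin, hx0, hx1⟩
          have hfeq : ⌊x * (k:ℝ)⌋₊ = (i:ℕ) := by omega
          have h0 : (0:ℝ) ≤ x * k := mul_nonneg hx0 hkR.le
          rw [Nat.floor_eq_iff h0] at hfeq
          constructor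
          · rw [div_le_iff₀ hkR]; linarith [hfeq.1]
          · rw [lt_div_iff₀ hkR]; linarith [hfeq.2]
        · rintro ⟨hxl, hxr⟩
          have hik1 : ((i:ℝ)+1) ≤ k := by
            have : (i:ℕ) + 1 ≤ k := i.isLt
            exact_mod_cast this
          have hx0 : (0:ℝ) ≤ x :=
            le_trans (div_nonneg (Nat.cast_nonneg _) hkR.le) hxl
          have hx1 : x ≤ 1 := by
            have : x < ((i:ℝ)+1)/k := hxr
            have h2 : ((i:ℝ)+1)/k ≤ 1 := by rw [div_le_one hkR]; exact hik1
            linarith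
          have hfeq : ⌊x * (k:ℝ)⌋₊ = (i:ℕ) := by
            rw [Nat.floor_eq_iff (mul_nonneg hx0 hkR.le)]
            constructor
            · calc ((i:ℕ):ℝ) = ((i:ℝ)/k) * k := by field_simp
                _ ≤ x * k := by nlinarith
            · calc x * k < (((i:ℝ)+1)/k) * k := by nlinarith
                _ = (i:ℕ) + 1 := by field_simp
          refine ⟨?_, hx0, hx1⟩
          rw [hfeq]
          omega
      rw [hset, Real.volume_Ico]
      congr 1
      field_simp
      ring
    · have hieq : (i : ℕ) = k - 1 := by omega
      have hset : phi0 k hk ⁻¹' {i} ∩ Set.Icc (0:ℝ) 1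
          = Set.Icc (((k:ℝ)-1)/k) 1 := by
        ext x
        simp only [Set.mem_inter_iff, Set.mem_preimage, Set.mem_singleton_iff,
          Set.mem_Icc, phi0, Fin.ext_iff, hieq]
        have hcast : (((k-1:ℕ)):ℝ) = (k:ℝ) - 1 := by
          push_cast [Nat.cast_sub hk]; ring
        constructor
        · rintro ⟨hmin, hx0, hx1⟩
          have hge : (k-1:ℕ) ≤ ⌊x * (k:ℝ)⌋₊ := by omega
          have := Nat.le_floor_iff (mul_nonneg hx0 hkR.le) |>.1 hge
          refine ⟨?_, hx1⟩
          rw [div_le_iff₀ hkR]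
          calc (k:ℝ) - 1 = ((k-1:ℕ):ℝ) := hcast.symm
            _ ≤ x * k := this
        · rintro ⟨hxl, hx1⟩
          have hx0 : (0:ℝ) ≤ x := by
            have h0 : (0:ℝ) ≤ ((k:ℝ)-1)/k := by
              have h1 : (1:ℝ) ≤ k := by exact_mod_cast hk
              have : (0:ℝ) ≤ (k:ℝ)-1 := by linarith
              exact div_nonneg this hkR.le
            linarith
          have hge : (k-1:ℕ) ≤ ⌊x * (k:ℝ)⌋₊ := by
            rw [Nat.le_floor_iff (mul_nonneg hx0 hkR.le), hcast]
            rw [div_le_iff₀ hkR] at hxl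
            linarith
          exact ⟨by omega, hx0, hx1⟩
      rw [hset, Real.volume_Icc]
      congr 1
      field_simp
      ring

theorem comb_dist_le_graphon_dist (k : ℕ) (hk : 0 < k)
    (A B : Matrix (Fin k) (Fin k) ℝ) :
    (1 / (k : ℝ)) *
        sInf {r : ℝ | ∃ σ₁ σ₂ : Equiv.Perm (Fin k),
          r = Real.sqrt (∑ i, ∑ j, ((permMat σ₁ * A * permMat σ₂) i j - B i j) ^ 2)}
      ≤ sInf {r : ℝ | ∃ φ₁ φ₂ : ℝ → Fin k, MeasurePres φ₁ ∧ MeasurePres φ₂ ∧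
          r = Real.sqrt (∫ x in Set.Icc (0 : ℝ) 1, ∫ y in Set.Icc (0 : ℝ) 1,
                (A (φ₁ x) (φ₁ y) - B (φ₂ x) (φ₂ y)) ^ 2)} := by
  have hkR : (0:ℝ) < k := Nat.cast_pos.2 hk
  refine le_csInf ⟨_, phi0 k hk, phi0 k hk, phi0_measurePres k hk,
    phi0_measurePres k hk, rfl⟩ ?_
  rintro r ⟨φ₁, φ₂, hφ₁, hφ₂, rfl⟩
  -- the coupling measure
  set ψ : ℝ → Fin k × Fin k := fun x => (φ₁ x, φ₂ x) with hψdef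
  have hψ : Measurable ψ := hφ₁.1.prodMk hφ₂.1
  set C : Fin k × Fin k → ℝ :=
    fun p => (volume (ψ ⁻¹' {p} ∩ Set.Icc (0:ℝ) 1)).toReal with hCdef
  have hC0 : ∀ p, 0 ≤ C p := fun p => ENNReal.toReal_nonneg
  -- fiber measures are finite
  have hfin : ∀ p : Fin k × Fin k, volume (ψ ⁻¹' {p} ∩ Set.Icc (0:ℝ) 1) ≠ ⊤ := by
    intro p
    exact (lt_of_le_of_lt (measure_mono Set.inter_subset_right) measure_Icc_lt_top).ne
  -- row sums of C
  have hfib1 : ∀ i : Fin k, ∑ i' : Fin k, C (i, i') = 1 / k := by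
    intro i
    have hdis : Pairwise (Function.onFun Disjoint
        fun i' : Fin k => ψ ⁻¹' {(i, i')} ∩ Set.Icc (0:ℝ) 1) := by
      intro a b hab
      simp only [Function.onFun, Set.disjoint_left]
      rintro x ⟨hxa, -⟩ ⟨hxb, -⟩
      simp only [Set.mem_preimage, Set.mem_singleton_iff] at hxa hxb
      exact hab (by rw [hxa] at hxb; exact (Prod.ext_iff.1 hxb).2)
    have hmeas : ∀ i' : Fin k, MeasurableSet (ψ ⁻¹' {(i, i')} ∩ Set.Icc (0:ℝ) 1) :=
      fun i' => (hψ (measurableSet_singleton _)).inter measurableSet_Icc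
    have hun : (⋃ i' : Fin k, ψ ⁻¹' {(i, i')} ∩ Set.Icc (0:ℝ) 1)
        = φ₁ ⁻¹' {i} ∩ Set.Icc (0:ℝ) 1 := by
      ext x
      simp only [Set.mem_iUnion, Set.mem_inter_iff, Set.mem_preimage,
        Set.mem_singleton_iff, hψdef, Prod.ext_iff]
      constructor
      · rintro ⟨i', ⟨h1, h2⟩, h3⟩; exact ⟨h1, h3⟩
      · rintro ⟨h1, h3⟩; exact ⟨φ₂ x, ⟨h1, rfl⟩, h3⟩
    have hsum := measure_iUnion (μ := volume) hdis hmeas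
    rw [hun, hφ₁.2 i, tsum_fintype] at hsum
    calc ∑ i' : Fin k, C (i, i')
        = (∑ i' : Fin k, volume (ψ ⁻¹' {(i, i')} ∩ Set.Icc (0:ℝ) 1)).toReal :=
          (ENNReal.toReal_sum fun i' _ => hfin _).symm
      _ = (ENNReal.ofReal (1/k)).toReal := by rw [← hsum]
      _ = 1 / k := ENNReal.toReal_ofReal (by positivity)
  have hfib2 : ∀ j : Fin k, ∑ i : Fin k, C (i, j) = 1 / k := by
    intro j
    have hdis : Pairwise (Function.onFun Disjoint
        fun i : Fin k => ψ ⁻¹' {(i, j)} ∩ Set.Icc (0:ℝ) 1) := by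
      intro a b hab
      simp only [Function.onFun, Set.disjoint_left]
      rintro x ⟨hxa, -⟩ ⟨hxb, -⟩
      simp only [Set.mem_preimage, Set.mem_singleton_iff] at hxa hxb
      exact hab (by rw [hxa] at hxb; exact (Prod.ext_iff.1 hxb).1)
    have hmeas : ∀ i : Fin k, MeasurableSet (ψ ⁻¹' {(i, j)} ∩ Set.Icc (0:ℝ) 1) :=
      fun i => (hψ (measurableSet_singleton _)).inter measurableSet_Icc
    have hun : (⋃ i : Fin k, ψ ⁻¹' {(i, j)} ∩ Set.Icc (0:ℝ) 1)
        = φ₂ ⁻¹' {j} ∩ Set.Icc (0:ℝ) 1 := by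
      ext x
      simp only [Set.mem_iUnion, Set.mem_inter_iff, Set.mem_preimage,
        Set.mem_singleton_iff, hψdef, Prod.ext_iff]
      constructor
      · rintro ⟨i, ⟨h1, h2⟩, h3⟩; exact ⟨h2, h3⟩
      · rintro ⟨h2, h3⟩; exact ⟨φ₁ x, ⟨rfl, h2⟩, h3⟩
    have hsum := measure_iUnion (μ := volume) hdis hmeas
    rw [hun, hφ₂.2 j, tsum_fintype] at hsum
    calc ∑ i : Fin k, C (i, j)
        = (∑ i : Fin k, volume (ψ ⁻¹' {(i, j)} ∩ Set.Icc (0:ℝ) 1)).toReal :=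
          (ENNReal.toReal_sum fun i _ => hfin _).symm
      _ = (ENNReal.ofReal (1/k)).toReal := by rw [← hsum]
      _ = 1 / k := ENNReal.toReal_ofReal (by positivity)
  -- the doubly stochastic matrix
  have hD : (Matrix.of fun i j : Fin k => (k:ℝ) * C (i, j)) ∈ doublyStochastic ℝ (Fin k) := by
    rw [mem_doublyStochastic_iff_sum]
    refine ⟨fun i j => mul_nonneg hkR.le (hC0 _), fun i => ?_, fun j => ?_⟩
    · simp only [Matrix.of_apply]
      rw [← Finset.mul_sum, hfib1 i]
      field_simp
    · simp only [Matrix.of_apply]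
      rw [← Finset.mul_sum, hfib2 j]
      field_simp
  -- the cost function
  set cost : Fin k × Fin k → Fin k × Fin k → ℝ :=
    fun p q => (A p.1 q.1 - B p.2 q.2)^2 with hcostdef
  set I₀ : ℝ := ∑ p : Fin k × Fin k, C p * ∑ q : Fin k × Fin k, C q * cost p q with hI₀def
  -- the integral equals I₀
  have hI : (∫ x in Set.Icc (0:ℝ) 1, ∫ y in Set.Icc (0:ℝ) 1,
        (A (φ₁ x) (φ₁ y) - B (φ₂ x) (φ₂ y)) ^ 2) = I₀ := by
    have hin : ∀ x : ℝ, (∫ y in Set.Icc (0:ℝ) 1,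
        (A (φ₁ x) (φ₁ y) - B (φ₂ x) (φ₂ y)) ^ 2)
        = ∑ q : Fin k × Fin k, C q * cost (ψ x) q := by
      intro x
      have := integral_comp_fiber ψ hψ (fun q => cost (ψ x) q)
      simpa [hCdef, mul_comm] using this
    calc (∫ x in Set.Icc (0:ℝ) 1, ∫ y in Set.Icc (0:ℝ) 1,
          (A (φ₁ x) (φ₁ y) - B (φ₂ x) (φ₂ y)) ^ 2)
        = ∫ x in Set.Icc (0:ℝ) 1, ∑ q : Fin k × Fin k, C q * cost (ψ x) q := by
          simp only [hin]
      _ = ∑ q : Fin k × Fin k, ∫ x in Set.Icc (0:ℝ) 1, C q * cost (ψ x) q := by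
          apply integral_finset_sum
          intro q _
          exact (integrableOn_comp_fiber ψ hψ (fun p => cost p q)).const_mul (C q)
      _ = ∑ q : Fin k × Fin k, C q * ∫ x in Set.Icc (0:ℝ) 1, cost (ψ x) q := by
          simp only [integral_const_mul]
      _ = ∑ q : Fin k × Fin k, C q * ∑ p : Fin k × Fin k, C p * cost p q := by
          refine Finset.sum_congr rfl fun q _ => ?_
          rw [integral_comp_fiber ψ hψ (fun p => cost p q)]
      _ = I₀ := by
          rw [hI₀def]
          simp only [Finset.mul_sum]
          rw [Finset.sum_comm]
          exact Finset.sum_congr rfl fun p _ => Finset.sum_congr rfl fun q _ => by ring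
  -- first Birkhoff step
  set g₁ : Fin k → Fin k → ℝ :=
    fun i i' => ∑ q : Fin k × Fin k, C q * cost (i, i') q with hg₁def
  obtain ⟨σ₁, hσ₁⟩ := exists_perm_le _ hD g₁
  have hr1 : ∑ i, ∑ j, (Matrix.of fun i j : Fin k => (k:ℝ) * C (i, j)) i j * g₁ i j
      = k * I₀ := by
    rw [hI₀def, Finset.mul_sum, Fintype.sum_prod_type]
    refine Finset.sum_congr rfl fun a _ => Finset.sum_congr rfl fun b _ => ?_
    simp only [Matrix.of_apply, hg₁def]
    ring
  rw [hr1] at hσ₁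
  -- second Birkhoff step
  set g₂ : Fin k → Fin k → ℝ :=
    fun j j' => ∑ i, cost (i, σ₁ i) (j, j') with hg₂def
  obtain ⟨σ₂, hσ₂⟩ := exists_perm_le _ hD g₂
  have hswap : ∑ p : Fin k × Fin k, C p * g₂ p.1 p.2 = ∑ i, g₁ i (σ₁ i) := by
    simp only [hg₁def, hg₂def, Finset.mul_sum]
    rw [Finset.sum_comm]
  have hr2 : ∑ j, ∑ j', (Matrix.of fun i j : Fin k => (k:ℝ) * C (i, j)) j j' * g₂ j j'
      = k * ∑ i, g₁ i (σ₁ i) := by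
    rw [← hswap, Finset.mul_sum, Fintype.sum_prod_type]
    refine Finset.sum_congr rfl fun a _ => Finset.sum_congr rfl fun b _ => ?_
    simp only [Matrix.of_apply]
    ring
  rw [hr2] at hσ₂
  set S : ℝ := ∑ j, g₂ j (σ₂ j) with hSdef
  have hS_le : S ≤ k^2 * I₀ := by
    calc S ≤ k * ∑ i, g₁ i (σ₁ i) := hσ₂
      _ ≤ k * (k * I₀) := by
          exact mul_le_mul_of_nonneg_left hσ₁ hkR.le
      _ = k^2 * I₀ := by ring
  have hS0 : 0 ≤ S := by
    refine Finset.sum_nonneg fun j _ => Finset.sum_nonneg fun i _ => ?_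
    exact sq_nonneg _
  -- relate S to the Frobenius expression
  have hentry : ∀ (τ₁ τ₂ : Equiv.Perm (Fin k)) (i j : Fin k),
      (permMat τ₁ * A * permMat τ₂) i j = A (τ₁ i) (τ₂.symm j) := by
    intro τ₁ τ₂ i j
    have h1 : ∀ l, (permMat τ₁ * A) i l = A (τ₁ i) l := by
      intro l
      rw [Matrix.mul_apply]
      simp only [permMat, Matrix.of_apply, ite_mul, one_mul, zero_mul]
      rw [Finset.sum_eq_single (τ₁ i)] <;> simp +contextual [eq_comm]
    rw [Matrix.mul_apply]
    have h2 : ∀ l, (permMat τ₁ * A) i l * (permMat τ₂ l j)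
        = (if τ₂ l = j then A (τ₁ i) l else 0) := by
      intro l
      rw [h1]
      simp [permMat, mul_ite]
    simp only [h2]
    rw [Finset.sum_eq_single (τ₂.symm j)]
    · simp
    · intro l _ hl
      rw [if_neg]
      intro h
      exact hl (by rw [← h, Equiv.symm_apply_apply])
    · simp
  have hfrob : ∑ i, ∑ j, ((permMat σ₁⁻¹ * A * permMat σ₂) i j - B i j)^2 = S := by
    simp only [hentry]
    calc ∑ i, ∑ j, (A (σ₁⁻¹ i) (σ₂.symm j) - B i j)^2
        = ∑ i, ∑ j, (A (σ₁⁻¹ (σ₁ i)) (σ₂.symm (σ₂ j)) - B (σ₁ i) (σ₂ j))^2 := by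
          rw [← Equiv.sum_comp σ₁ (fun i => ∑ j, (A (σ₁⁻¹ i) (σ₂.symm j) - B i j)^2)]
          refine Finset.sum_congr rfl fun i _ => ?_
          rw [← Equiv.sum_comp σ₂
            (fun j => (A (σ₁⁻¹ (σ₁ i)) (σ₂.symm j) - B (σ₁ i) j)^2)]
      _ = ∑ i, ∑ j, (A i j - B (σ₁ i) (σ₂ j))^2 := by
          simp [Equiv.Perm.inv_def, Equiv.symm_apply_apply]
      _ = ∑ j, ∑ i, (A i j - B (σ₁ i) (σ₂ j))^2 := Finset.sum_comm
      _ = S := by rw [hSdef]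
  -- conclude
  have hbdd : BddBelow {r : ℝ | ∃ σ₁ σ₂ : Equiv.Perm (Fin k),
      r = Real.sqrt (∑ i, ∑ j, ((permMat σ₁ * A * permMat σ₂) i j - B i j) ^ 2)} := by
    refine ⟨0, ?_⟩
    rintro r ⟨τ₁, τ₂, rfl⟩
    exact Real.sqrt_nonneg _
  have hmem : Real.sqrt S ∈ {r : ℝ | ∃ σ₁ σ₂ : Equiv.Perm (Fin k),
      r = Real.sqrt (∑ i, ∑ j, ((permMat σ₁ * A * permMat σ₂) i j - B i j) ^ 2)} :=
    ⟨σ₁⁻¹, σ₂, by rw [hfrob]⟩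
  have hinf := csInf_le hbdd hmem
  calc (1 / (k : ℝ)) * sInf {r : ℝ | ∃ σ₁ σ₂ : Equiv.Perm (Fin k),
        r = Real.sqrt (∑ i, ∑ j, ((permMat σ₁ * A * permMat σ₂) i j - B i j) ^ 2)}
      ≤ (1 / (k : ℝ)) * Real.sqrt S := by
        exact mul_le_mul_of_nonneg_left hinf (by positivity)
    _ = Real.sqrt (S / k^2) := by
        rw [Real.sqrt_div hS0, Real.sqrt_sq hkR.le]
        ring
    _ ≤ Real.sqrt I₀ := by
        apply Real.sqrt_le_sqrt
        rw [div_le_iff₀ (by positivity : (0:ℝ) < (k:ℝ)^2)]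
        linarith [hS_le]
    _ = Real.sqrt (∫ x in Set.Icc (0 : ℝ) 1, ∫ y in Set.Icc (0 : ℝ) 1,
          (A (φ₁ x) (φ₁ y) - B (φ₂ x) (φ₂ y)) ^ 2) := by rw [hI]
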